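/- (Sandwich error bound) Suppose κ̲(r) ≤ E_z[∑_{j=0}^{τ(z)−1} r(X_j)] ≤ κ̃(r) and κ̲(e) ≤ E_z[τ(z)] ≤ κ̃(e), where κ̲(r), κ̲(e), κ̃(r), κ̃(e) are positive reals with κ̲(r) = r(z) + ν̃(I − B̃)^{-1} r̃ and κ̲(e) = 1 + ν̃(I − B̃)^{-1} ẽ. Then κ̲(r)/κ̃(e) ≤ α(r) ≤ κ̃(r)/κ̲(e) and κ̲(r)/κ̃(e) ≤ π̃ r ≤ κ̃(r)/κ̲(e), and consequently |α(r) − π̃ r| ≤ κ̃(r)/κ̲(e) − κ̲(r)/κ̃(e), where α(r) = ∑_x π(x) r(x) and π̃ r = ∑_{x∈A} π̃(x) r(x). -/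

import Mathlib

open MeasureTheory ENNReal Filter

noncomputable section

namespace MCTrunc

variable {S : Type*}

/-- `P` is a (row-)stochastic matrix on the state space `S`:
nonnegative entries and rows summing to one. -/
def IsStochasticMatrix (P : S → S → ℝ) : Prop :=
  (∀ x y, 0 ≤ P x y) ∧ ∀ x, HasSum (fun y => P x y) 1

open scoped Classical in
/-- `n`-step transition probabilities associated with `P`. -/
def stepIter (P : S → S → ℝ) : ℕ → S → S → ℝ
  | 0 => fun x y => if x = y then 1 else 0
  | n + 1 => fun x y => ∑' w, stepIter P n x w * P w y

/-- Irreducibility of the transition matrix `P`. -/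
def IsIrreducibleMatrix (P : S → S → ℝ) : Prop :=
  ∀ x y, ∃ n : ℕ, 0 < stepIter P n x y

/-- `μ x` is the law of the Markov chain with one-step transition matrix `P`
started at `x`, specified through its finite-dimensional distributions. -/
def IsMarkovChain [MeasurableSpace S] (P : S → S → ℝ) (μ : S → Measure (ℕ → S)) : Prop :=
  (∀ x, IsProbabilityMeasure (μ x)) ∧
  ∀ (n : ℕ) (path : ℕ → S),
    μ (path 0) {ω | ∀ i ≤ n, ω i = path i} =
      ENNReal.ofReal (∏ i ∈ Finset.range n, P (path i) (path (i + 1)))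

/-- First hitting time `inf {n ≥ 0 : X_n ∈ C}`, valued in `ℕ∞`. -/
def hitTime (C : Set S) (ω : ℕ → S) : ℕ∞ :=
  sInf {m : ℕ∞ | ∃ n : ℕ, m = n ∧ ω n ∈ C}

/-- First hitting time of `C` strictly after time `θ`:
`inf {n : θ < n, X_n ∈ C}`. -/
def hitTimeAfter (C : Set S) (θ : ℕ∞) (ω : ℕ → S) : ℕ∞ :=
  sInf {m : ℕ∞ | ∃ n : ℕ, m = n ∧ θ < (n : ℕ∞) ∧ ω n ∈ C}

/-- First return time `τ(z) = inf {n ≥ 1 : X_n = z}`. -/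
def retTime (z : S) (ω : ℕ → S) : ℕ∞ :=
  sInf {m : ℕ∞ | ∃ n : ℕ, m = n ∧ 1 ≤ n ∧ ω n = z}

open scoped Classical in
/-- `∑_{a ≤ j < b} r(X_j)` along the path `ω`, valued in `ℝ≥0∞`. -/
def sumOver (r : S → ℝ) (a b : ℕ∞) (ω : ℕ → S) : ℝ≥0∞ :=
  ∑' j : ℕ, if a ≤ (j : ℕ∞) ∧ (j : ℕ∞) < b then ENNReal.ofReal (r (ω j)) else 0

/-- `∑_{0 ≤ j < b} r(X_j)` along the path `ω`. -/
def sumBefore (r : S → ℝ) (b : ℕ∞) (ω : ℕ → S) : ℝ≥0∞ := sumOver r 0 b ω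

/-- The chain is positive recurrent: from every state, the expected return time
to that state is finite. -/
def IsPositiveRecurrent [MeasurableSpace S] (μ : S → Measure (ℕ → S)) : Prop :=
  ∀ x : S, ∫⁻ ω, sumBefore (fun _ => 1) (retTime x ω) ω ∂ μ x < ⊤

/-- The chain is recurrent: every state is revisited almost surely. -/
def IsRecurrent [MeasurableSpace S] (μ : S → Measure (ℕ → S)) : Prop :=
  ∀ x : S, μ x {ω | retTime x ω < ⊤} = 1

variable [DecidableEq S]

/-- The substochastic matrix `B̃ = (P(x,y) : x, y ∈ A' = A \ {z})`. -/
def trB (P : S → S → ℝ) (z : S) (A : Finset S) :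
    Matrix ↥(A.erase z) ↥(A.erase z) ℝ :=
  Matrix.of fun x y => P x y

/-- The row vector `ν̃ = (P(z,x) : x ∈ A')`. -/
def trNu (P : S → S → ℝ) (z : S) (A : Finset S) : ↥(A.erase z) → ℝ := fun x => P z x

/-- The column vector `p̃ = (P(x,z) : x ∈ A')`. -/
def trCol (P : S → S → ℝ) (z : S) (A : Finset S) : ↥(A.erase z) → ℝ := fun x => P x z

/-- The all-ones column vector `ẽ` on `A'`. -/
def trE (z : S) (A : Finset S) : ↥(A.erase z) → ℝ := fun _ => 1

/-- Restriction of `f : S → ℝ` to `A' = A \ {z}`. -/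
def trRes (f : S → ℝ) (z : S) (A : Finset S) : ↥(A.erase z) → ℝ := fun x => f x

/-- The truncation approximation `π̃` to the stationary distribution:
`π̃(x) = (ν̃ (I - B̃)⁻¹)(x) / (1 + ν̃ (I - B̃)⁻¹ ẽ)` for `x ∈ A'`,
`π̃(z) = (1 + ν̃ (I - B̃)⁻¹ ẽ)⁻¹`, and `π̃ = 0` off `A`. -/
def trPi (P : S → S → ℝ) (z : S) (A : Finset S) (x : S) : ℝ :=
  let row := Matrix.vecMul (trNu P z A) (1 - trB P z A)⁻¹
  let D : ℝ := 1 + dotProduct row (trE z A)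
  if x = z then 1 / D
  else if hx : x ∈ A.erase z then row ⟨x, hx⟩ / D
  else 0

/-- `max {|v x| : x ∈ T}` (as a supremum). -/
def supOn {ι : Type*} (T : Set ι) (v : ι → ℝ) : ℝ := sSup ((fun x => |v x|) '' T)

/-- `min {v x : x ∈ T}` (as an infimum). -/
def infOn {ι : Type*} (T : Set ι) (v : ι → ℝ) : ℝ := sInf (v '' T)

/-- The excursion times `Γ_i`: `Γ_0 = 0`, `Γ_i = inf {n > T_i : X_n ∈ K}` where
`T_1 = inf {n ≥ 0 : X_n ∈ A^c}` and `T_{i+1} = inf {n > Γ_i : X_n ∈ A^c}`. -/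
def excGamma (Acomp K : Set S) (ω : ℕ → S) : ℕ → ℕ∞
  | 0 => 0
  | 1 => hitTimeAfter K (hitTime Acomp ω) ω
  | i + 2 => hitTimeAfter K (hitTimeAfter Acomp (excGamma Acomp K ω (i + 1)) ω) ω

/-- `N = inf {n ≥ 1 : τ(z) < Γ_n}`. -/
def excN (z : S) (Acomp K : Set S) (ω : ℕ → S) : ℕ∞ :=
  sInf {m : ℕ∞ | ∃ n : ℕ, m = n ∧ 1 ≤ n ∧ retTime z ω < excGamma Acomp K ω n}

/-- Entries of the powers `B^n` of the taboo matrix `B = (P(x,y) : x,y ∈ S \ {z})`,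
valued in `ℝ≥0∞`. -/
def tabooPow (P : S → S → ℝ) (z : S) : ℕ → S → S → ℝ≥0∞
  | 0 => fun x y => if x = y then 1 else 0
  | n + 1 => fun x y =>
      ∑' w : S, if w = z then 0 else tabooPow P z n x w * ENNReal.ofReal (P w y)

end MCTrunc

open MCTrunc in
private lemma sumBefore_eq_tsum' {S : Type*} (r : S → ℝ) (b : ℕ∞) (ω : ℕ → S) :
    sumBefore r b ω = ∑' j : ℕ, if (j : ℕ∞) < b then ENNReal.ofReal (r (ω j)) else 0 := by
  simp [sumBefore, sumOver, zero_le]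

open MCTrunc in
private lemma sumBefore_decomp' {S : Type*} [DecidableEq S] (r : S → ℝ) (b : ℕ∞) (ω : ℕ → S) :
    sumBefore r b ω
      = ∑' y : S, ENNReal.ofReal (r y) * sumBefore (fun s => if s = y then 1 else 0) b ω := by
  rw [sumBefore_eq_tsum']
  have h : ∀ y : S, ENNReal.ofReal (r y) * sumBefore (fun s => if s = y then 1 else 0) b ω
      = ∑' j : ℕ, if (j : ℕ∞) < b then (if y = ω j then ENNReal.ofReal (r y) else 0) else 0 := by
    intro y
    rw [sumBefore_eq_tsum', ← ENNReal.tsum_mul_left]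
    congr 1; funext j
    by_cases hj : (j : ℕ∞) < b
    · by_cases hy : y = ω j
      · simp [hj, hy]
      · have hy' : ω j ≠ y := fun h => hy h.symm
        simp [hj, hy, hy']
    · simp [hj]
  simp_rw [h]
  rw [ENNReal.tsum_comm]
  congr 1; funext j
  by_cases hj : (j : ℕ∞) < b
  · simp only [hj, if_true]
    rw [show (∑' a : S, if a = ω j then ENNReal.ofReal (r a) else 0)
        = ∑' a : S, if a = ω j then ENNReal.ofReal (r (ω j)) else 0 from
      tsum_congr fun a => by by_cases h : a = ω j <;> simp [h]]
    exact (tsum_ite_eq (ω j) (fun _ => ENNReal.ofReal (r (ω j)))).symm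
  · simp [hj]

open MCTrunc in
private lemma measurable_sumBefore' {S : Type*} [Countable S] [MeasurableSpace S]
    [MeasurableSingletonClass S] (f : S → ℝ) (z : S) :
    Measurable fun ω : ℕ → S => sumBefore f (retTime z ω) ω := by
  have hform : (fun ω : ℕ → S => sumBefore f (retTime z ω) ω)
      = fun ω => ∑' j : ℕ, if (j : ℕ∞) < retTime z ω then ENNReal.ofReal (f (ω j)) else 0 := by
    funext ω; exact sumBefore_eq_tsum' f _ ω
  rw [hform]
  apply Measurable.ennreal_tsum
  intro j
  have hset : {ω : ℕ → S | (j : ℕ∞) < retTime z ω}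
      = ⋂ n ∈ Finset.Icc 1 j, {ω : ℕ → S | ω n ≠ z} := by
    ext ω
    simp only [Set.mem_setOf_eq, Set.mem_iInter, Finset.mem_Icc]
    constructor
    · rintro h n ⟨h1, h2⟩ hz
      have hle : retTime z ω ≤ (n : ℕ∞) := sInf_le ⟨n, rfl, h1, hz⟩
      exact absurd h (not_lt.mpr (hle.trans (by exact_mod_cast h2)))
    · intro h
      have hle : ((j + 1 : ℕ) : ℕ∞) ≤ retTime z ω := by
        apply le_sInf
        rintro m ⟨n, rfl, h1, hz⟩
        by_contra hlt
        push_neg at hlt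
        have hnj : n ≤ j := by
          have : n < j + 1 := by exact_mod_cast hlt
          omega
        exact h n ⟨h1, hnj⟩ hz
      exact lt_of_lt_of_le (by exact_mod_cast Nat.lt_succ_self j) hle
  apply Measurable.ite
  · rw [hset]
    refine MeasurableSet.iInter fun n => MeasurableSet.iInter fun _ => ?_
    have hpre : {ω : ℕ → S | ω n ≠ z} = (fun ω : ℕ → S => ω n) ⁻¹' {z}ᶜ := rfl
    rw [hpre]
    exact measurable_pi_apply n (measurableSet_singleton z).compl
  · exact ENNReal.measurable_ofReal.comp
      ((measurable_of_countable f).comp (measurable_pi_apply j))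
  · exact measurable_const

open MCTrunc in
/-- sandwich error bound: if `κ̲(r) ≤ E_z[∑_{j<τ(z)} r(X_j)] ≤ κ̃(r)` and
`κ̲(e) ≤ E_z[τ(z)] ≤ κ̃(e)`, then `κ̲(r)/κ̃(e) ≤ α(r) ≤ κ̃(r)/κ̲(e)`,
`κ̲(r)/κ̃(e) ≤ π̃ r ≤ κ̃(r)/κ̲(e)`, and `|α(r) - π̃ r| ≤ κ̃(r)/κ̲(e) - κ̲(r)/κ̃(e)`. -/
theorem sandwich_error_bound
    {S : Type*} [Countable S] [DecidableEq S]
    [MeasurableSpace S] [MeasurableSingletonClass S]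
    (P : S → S → ℝ) (μ : S → MeasureTheory.Measure (ℕ → S)) (z : S) (A : Finset S)
    (hP : IsStochasticMatrix P) (hirr : IsIrreducibleMatrix P)
    (hμ : IsMarkovChain P μ) (hpos : IsPositiveRecurrent μ) (hzA : z ∈ A)
    (hunit : IsUnit (1 - trB P z A))
    (π : S → ℝ) (hπ0 : ∀ x, 0 ≤ π x) (hπ1 : HasSum π 1)
    (hstat : ∀ y, HasSum (fun x => π x * P x y) (π y))
    (hrep : ∀ y : S,
      ENNReal.ofReal (π y) * (∫⁻ ω, sumBefore (fun _ => 1) (retTime z ω) ω ∂ μ z)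
        = ∫⁻ ω, sumBefore (fun s => if s = y then 1 else 0) (retTime z ω) ω ∂ μ z)
    (r : S → ℝ) (hr : ∀ x, 0 ≤ r x) (hsummable : Summable (fun x => π x * r x))
    (κr κe Kr Ke : ℝ)
    (hκr : κr = r z + dotProduct
        (Matrix.vecMul (trNu P z A) (1 - trB P z A)⁻¹) (trRes r z A))
    (hκe : κe = 1 + dotProduct
        (Matrix.vecMul (trNu P z A) (1 - trB P z A)⁻¹) (trE z A))
    (hκrpos : 0 < κr) (hκepos : 0 < κe) (hKrpos : 0 < Kr) (hKepos : 0 < Ke)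
    (hlr : ENNReal.ofReal κr ≤ ∫⁻ ω, sumBefore r (retTime z ω) ω ∂ μ z)
    (hur : (∫⁻ ω, sumBefore r (retTime z ω) ω ∂ μ z) ≤ ENNReal.ofReal Kr)
    (hle : ENNReal.ofReal κe ≤ ∫⁻ ω, sumBefore (fun _ => 1) (retTime z ω) ω ∂ μ z)
    (hue : (∫⁻ ω, sumBefore (fun _ => 1) (retTime z ω) ω ∂ μ z) ≤ ENNReal.ofReal Ke) :
    (κr / Ke ≤ ∑' x : S, π x * r x) ∧ ((∑' x : S, π x * r x) ≤ Kr / κe) ∧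
    (κr / Ke ≤ ∑ x ∈ A, trPi P z A x * r x) ∧
    ((∑ x ∈ A, trPi P z A x * r x) ≤ Kr / κe) ∧
    |(∑' x : S, π x * r x) - ∑ x ∈ A, trPi P z A x * r x| ≤ Kr / κe - κr / Ke := by
  set L := ∫⁻ ω, sumBefore (fun _ => 1) (retTime z ω) ω ∂ μ z with hL
  set αr := ∑' x : S, π x * r x with hαr
  have hα0 : 0 ≤ αr := tsum_nonneg fun x => mul_nonneg (hπ0 x) (hr x)
  have key : ∫⁻ ω, sumBefore r (retTime z ω) ω ∂ μ z = ENNReal.ofReal αr * L := by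
    have h1 : ∫⁻ ω, sumBefore r (retTime z ω) ω ∂ μ z
        = ∫⁻ ω, ∑' y : S, ENNReal.ofReal (r y)
            * sumBefore (fun s => if s = y then 1 else 0) (retTime z ω) ω ∂ μ z := by
      congr 1; funext ω; exact sumBefore_decomp' r _ ω
    rw [h1, MeasureTheory.lintegral_tsum
      (fun y => ((measurable_sumBefore' (fun s => if s = y then 1 else 0) z).const_mul (ENNReal.ofReal (r y))).aemeasurable)]
    have h2 : ∀ y : S, ∫⁻ ω, ENNReal.ofReal (r y)
        * sumBefore (fun s => if s = y then 1 else 0) (retTime z ω) ω ∂ μ z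
        = ENNReal.ofReal (π y * r y) * L := by
      intro y
      rw [MeasureTheory.lintegral_const_mul _ (measurable_sumBefore' _ z), ← hrep y,
        ENNReal.ofReal_mul (hπ0 y)]
      ring
    simp_rw [h2]
    rw [ENNReal.tsum_mul_right,
      ← ENNReal.ofReal_tsum_of_nonneg (fun x => mul_nonneg (hπ0 x) (hr x)) hsummable]
  have hκrKr : κr ≤ Kr := (ENNReal.ofReal_le_ofReal_iff hKrpos.le).mp (hlr.trans hur)
  have hκeKe : κe ≤ Ke := (ENNReal.ofReal_le_ofReal_iff hKepos.le).mp (hle.trans hue)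
  have hlow : κr / Ke ≤ αr := by
    have h3 : ENNReal.ofReal κr ≤ ENNReal.ofReal (αr * Ke) := by
      calc ENNReal.ofReal κr ≤ ENNReal.ofReal αr * L := key ▸ hlr
        _ ≤ ENNReal.ofReal αr * ENNReal.ofReal Ke := mul_le_mul_right hue _
        _ = ENNReal.ofReal (αr * Ke) := (ENNReal.ofReal_mul hα0).symm
    have h4 := (ENNReal.ofReal_le_ofReal_iff (mul_nonneg hα0 hKepos.le)).mp h3
    exact (div_le_iff₀ hKepos).mpr h4
  have hupp : αr ≤ Kr / κe := by
    have h3 : ENNReal.ofReal (αr * κe) ≤ ENNReal.ofReal Kr := by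
      calc ENNReal.ofReal (αr * κe) = ENNReal.ofReal αr * ENNReal.ofReal κe :=
            ENNReal.ofReal_mul hα0
        _ ≤ ENNReal.ofReal αr * L := mul_le_mul_right hle _
        _ = ∫⁻ ω, sumBefore r (retTime z ω) ω ∂ μ z := key.symm
        _ ≤ ENNReal.ofReal Kr := hur
    have h4 := (ENNReal.ofReal_le_ofReal_iff hKrpos.le).mp h3
    exact (le_div_iff₀ hκepos).mpr h4
  have hκe0 : κe ≠ 0 := hκepos.ne'
  have hpisum : ∑ x ∈ A, trPi P z A x * r x = κr / κe := by
    set row := Matrix.vecMul (trNu P z A) (1 - trB P z A)⁻¹ with hrow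
    rw [← Finset.add_sum_erase A (fun x => trPi P z A x * r x) hzA]
    have hzv : trPi P z A z = 1 / κe := by
      rw [hκe, hrow]; simp [trPi]
    have hstep : ∀ x ∈ (A.erase z).attach, trPi P z A ↑x * r ↑x = row x * r ↑x / κe := by
      intro x _
      have hne : (↑x : S) ≠ z := Finset.ne_of_mem_erase x.2
      have : trPi P z A ↑x = row x / κe := by
        rw [hκe, hrow]
        simp [trPi, if_neg hne, dif_pos x.2]
      rw [this, div_mul_eq_mul_div]
    have hsum2 : ∑ x ∈ A.erase z, trPi P z A x * r x
        = dotProduct row (trRes r z A) / κe := by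
      rw [← Finset.sum_attach (A.erase z) (fun x => trPi P z A x * r x),
        Finset.sum_congr rfl hstep, dotProduct, ← Finset.sum_div]
      rw [Finset.univ_eq_attach]
      rfl
    rw [hzv, hsum2, hκr]
    field_simp
  have h5 : κr / Ke ≤ κr / κe := by gcongr
  have h6 : κr / κe ≤ Kr / κe := by gcongr
  refine ⟨hlow, hupp, ?_, ?_, ?_⟩
  · rw [hpisum]; linarith
  · rw [hpisum]; linarith
  · rw [hpisum, abs_sub_le_iff]
    constructor <;> linarith
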